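/- arXiv:1103.4817 — 3 statements merged into one kernel-verified Lean document; each statement's English description precedes it below -/
import Mathlib

section
/- A nontrivial word w in a free group F(X) is proper (i.e., there exist groups G and H with w[G] ≠ {1} and w[H] ≠ H) if and only if e(w) ≠ 1, where e(w) is the gcd of the exponent sums of the generators in w. -/
open Pointwise

/-- The verbal set `w[G]`: all values of the word `w` in `G`. -/
def verbalSet (w : FreeGroup ℕ) (G : Type*) [Group G] : Set G :=
  {g | ∃ φ : FreeGroup ℕ →* G, φ w = g}

/-- Exponent sums of a word in the generators, as a finitely supported function. -/
noncomputable def expSum (w : FreeGroup ℕ) : ℕ →₀ ℤ :=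
  Multiplicative.toAdd
    ((FreeGroup.lift fun i => Multiplicative.ofAdd (Finsupp.single i (1 : ℤ))) w)

/-- `e(w)`: the gcd of the exponent sums of the generators in `w` (0 if all are 0). -/
noncomputable def eWord (w : FreeGroup ℕ) : ℕ :=
  (expSum w).support.gcd fun i => ((expSum w) i).natAbs

/-- A word is proper if `w[G] ≠ {1}` and `w[H] ≠ H` for some groups `G`, `H`. -/
def IsProperWord (w : FreeGroup ℕ) : Prop :=
  ∃ (G : Type) (_ : Group G) (H : Type) (_ : Group H),
    verbalSet w G ≠ {1} ∧ verbalSet w H ≠ Set.univ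

/-- Bezout for finitely many integers. -/
private lemma bezout (s : Finset ℕ) (g : ℕ → ℤ) :
    ∃ c : ℕ → ℤ, ∑ i ∈ s, c i * g i = ((s.gcd fun i => (g i).natAbs : ℕ) : ℤ) := by
  classical
  induction s using Finset.induction_on with
  | empty => exact ⟨0, by simp⟩
  | @insert a s ha ih =>
    obtain ⟨c, hc⟩ := ih
    set G : ℤ := ((s.gcd fun i => (g i).natAbs : ℕ) : ℤ) with hG
    refine ⟨Function.update (fun i => Int.gcdB (g a) G * c i) a (Int.gcdA (g a) G), ?_⟩
    rw [Finset.sum_insert ha, Function.update_self]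
    have hrest : ∑ i ∈ s, Function.update (fun i => Int.gcdB (g a) G * c i) a
        (Int.gcdA (g a) G) i * g i = Int.gcdB (g a) G * G := by
      rw [← hc, Finset.mul_sum]
      apply Finset.sum_congr rfl
      intro i hi
      rw [Function.update_of_ne (by rintro rfl; exact ha hi), mul_assoc]
    rw [hrest]
    have hb := Int.gcd_eq_gcd_ab (g a) G
    have hGabs : G.natAbs = (s.gcd fun i => (g i).natAbs : ℕ) := by
      simp [hG]
    have : Int.gcd (g a) G = Nat.gcd ((g a).natAbs) (s.gcd fun i => (g i).natAbs) := by
      rw [Int.gcd, hGabs]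
    rw [this] at hb
    have hgcd : ((insert a s).gcd (fun i => (g i).natAbs))
        = Nat.gcd ((g a).natAbs) (s.gcd (fun i => (g i).natAbs)) := by
      rw [Finset.gcd_insert]
      rfl
    rw [hgcd, hb]; ring

/-- Any homomorphism value `φ w` is determined, modulo data on generators, by `expSum`. -/
private lemma phi_eq {A : Type} [AddCommGroup A] (φ : FreeGroup ℕ →* Multiplicative A)
    (w : FreeGroup ℕ) :
    Multiplicative.toAdd (φ w)
      = (expSum w).sum fun i t => t • Multiplicative.toAdd (φ (FreeGroup.of i)) := by
  classical
  set S : FreeGroup ℕ →* Multiplicative (ℕ →₀ ℤ) :=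
    FreeGroup.lift fun i => Multiplicative.ofAdd (Finsupp.single i (1 : ℤ)) with hS
  set L : (ℕ →₀ ℤ) →+ A :=
    Finsupp.liftAddHom (fun i => zmultiplesHom A (Multiplicative.toAdd (φ (FreeGroup.of i))))
    with hL
  have key : φ = (AddMonoidHom.toMultiplicative L).comp S := by
    apply FreeGroup.ext_hom
    intro a
    simp [hS, hL, AddMonoidHom.toMultiplicative]
  have hφw : φ w = (AddMonoidHom.toMultiplicative L) (S w) := by rw [key]; rfl
  rw [hφw]
  show L (Multiplicative.toAdd (S w)) = _
  rw [show Multiplicative.toAdd (S w) = expSum w from rfl, hL, Finsupp.liftAddHom_apply]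
  rfl

/-- A nontrivial word is proper iff `e(w) ≠ 1`. -/
theorem stmt_0 (w : FreeGroup ℕ) (hw : w ≠ 1) : IsProperWord w ↔ eWord w ≠ 1 := by
  constructor
  · -- if e(w) = 1 then w[H] = univ for every H
    rintro ⟨G, _, H, _, -, hH⟩
    intro he
    apply hH
    ext h
    simp only [Set.mem_univ, iff_true]
    obtain ⟨c, hc⟩ := bezout (expSum w).support (fun i => expSum w i)
    rw [show ((expSum w).support.gcd fun i => (expSum w i).natAbs) = eWord w from rfl, he] at hc
    push_cast at hc
    refine ⟨(zpowersHom H h).comp ((AddMonoidHom.toMultiplicative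
      (Finsupp.liftAddHom fun i => zmultiplesHom ℤ (c i))).comp
      (FreeGroup.lift fun i => Multiplicative.ofAdd (Finsupp.single i (1 : ℤ)))), ?_⟩
    have key : (Finsupp.liftAddHom fun i => zmultiplesHom ℤ (c i)) (expSum w) = 1 := by
      rw [Finsupp.liftAddHom_apply, Finsupp.sum, ← hc]
      apply Finset.sum_congr rfl
      intro i _
      simp [mul_comm]
    show h ^ ((Finsupp.liftAddHom fun i => zmultiplesHom ℤ (c i)) (expSum w)) = h
    rw [key, zpow_one]
  · -- if e(w) ≠ 1, use G = FreeGroup ℕ and H = Multiplicative (ZMod e)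
    intro he
    set e := eWord w with hedef
    refine ⟨FreeGroup ℕ, inferInstance, Multiplicative (ZMod e), inferInstance, ?_, ?_⟩
    · intro hset
      apply hw
      have : w ∈ verbalSet w (FreeGroup ℕ) := ⟨MonoidHom.id _, rfl⟩
      rw [hset] at this
      exact this
    · -- every value of w in ZMod e is 0
      have hval : ∀ φ : FreeGroup ℕ →* Multiplicative (ZMod e), φ w = 1 := by
        intro φ
        have h1 := phi_eq φ w
        have h2 : ((expSum w).sum fun i t => t • Multiplicative.toAdd (φ (FreeGroup.of i)))
            = (0 : ZMod e) := by
          rw [Finsupp.sum]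
          apply Finset.sum_eq_zero
          intro i hi
          have hdvd : e ∣ (expSum w i).natAbs := Finset.gcd_dvd hi
          have hdvd' : (e : ℤ) ∣ expSum w i :=
            dvd_trans (Int.natCast_dvd_natCast.mpr hdvd) (Int.natAbs_dvd.mpr dvd_rfl)
          have : ((expSum w i : ℤ) : ZMod e) = 0 :=
            (ZMod.intCast_zmod_eq_zero_iff_dvd _ _).mpr hdvd'
          rw [zsmul_eq_mul, this, zero_mul]
        rw [h2] at h1
        have : φ w = Multiplicative.ofAdd (0 : ZMod e) := by
          rw [← h1]; rfl
        simpa using this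
      intro huniv
      have hne : (1 : ZMod e) ≠ 0 := by
        intro h
        have := (ZMod.intCast_zmod_eq_zero_iff_dvd 1 e).mp (by exact_mod_cast h)
        have he1 : e ∣ 1 := by exact_mod_cast this
        exact he (Nat.dvd_one.mp he1)
      have : Multiplicative.ofAdd (1 : ZMod e) ∈ verbalSet w (Multiplicative (ZMod e)) := by
        rw [huniv]; trivial
      obtain ⟨φ, hφ⟩ := this
      rw [hval φ] at hφ
      exact hne (by simpa using congrArg Multiplicative.toAdd hφ.symm)
end

section
/- Every rational subset L of a monoid M can be written in the form L = ⋃_{i=1}^{k} a_{i1}·E_{i1}* ··· a_{it_i}·E_{it_i}*·a_{i,t_i+1}, where all a_{ij} ∈ M and each E_{ij} is a rational subset of M. -/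
open Pointwise

/-- Rational subsets of a monoid: the smallest family containing the finite sets and
closed under union, product and submonoid generation (Kleene star). -/
inductive IsRational {M : Type*} [Monoid M] : Set M → Prop
  | finite (s : Set M) (h : s.Finite) : IsRational s
  | union {s t : Set M} : IsRational s → IsRational t → IsRational (s ∪ t)
  | mul {s t : Set M} : IsRational s → IsRational t → IsRational (s * t)
  | star {s : Set M} : IsRational s → IsRational (Submonoid.closure s : Set M)

/-- The set `a 0 * (E 0)* * a 1 * (E 1)* * ⋯ * (E (n-1))* * a n`. -/
def chain {M : Type*} [Monoid M] :
    (n : ℕ) → (Fin (n + 1) → M) → (Fin n → Set M) → Set M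
  | 0, a, _ => {a 0}
  | n + 1, a, E =>
      ({a 0} : Set M) * (Submonoid.closure (E 0) : Set M) *
        chain n (fun i => a i.succ) (fun i => E i.succ)

/-- List-encoded chain: `chainL a [(E₁,b₁),…,(Eₙ,bₙ)] = {a} E₁* {b₁} E₂* ⋯ Eₙ* {bₙ}`. -/
def chainL {M : Type*} [Monoid M] (a : M) : List (Set M × M) → Set M
  | [] => {a}
  | (E, b) :: l => ({a} : Set M) * (Submonoid.closure E : Set M) * chainL b l

def mulAux {M : Type*} [Monoid M] :
    M → List (Set M × M) → M → List (Set M × M) → M × List (Set M × M)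
  | a, [], b, m => (a * b, m)
  | a, (E, c) :: l, b, m => (a, (E, (mulAux c l b m).1) :: (mulAux c l b m).2)

lemma singleton_mul_chainL {M : Type*} [Monoid M] (a b : M) (m : List (Set M × M)) :
    ({a} : Set M) * chainL b m = chainL (a * b) m := by
  cases m with
  | nil => simp [chainL, Set.singleton_mul_singleton]
  | cons p m =>
      obtain ⟨F, d⟩ := p
      show ({a} : Set M) * (({b} : Set M) * _ * chainL d m) = ({a * b} : Set M) * _ * chainL d m
      rw [← mul_assoc, ← mul_assoc, Set.singleton_mul_singleton]

lemma chainL_mul {M : Type*} [Monoid M] (a : M) (l : List (Set M × M)) (b : M)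
    (m : List (Set M × M)) :
    chainL a l * chainL b m = chainL (mulAux a l b m).1 (mulAux a l b m).2 := by
  induction l generalizing a with
  | nil => simpa [chainL, mulAux] using singleton_mul_chainL a b m
  | cons p l ih =>
      obtain ⟨E, c⟩ := p
      show ({a} : Set M) * _ * chainL c l * chainL b m = _
      rw [mul_assoc, ih c]
      rfl

lemma mulAux_rat {M : Type*} [Monoid M] {a : M} {l : List (Set M × M)} {b : M}
    {m : List (Set M × M)} (hl : ∀ p ∈ l, IsRational p.1) (hm : ∀ p ∈ m, IsRational p.1) :
    ∀ p ∈ (mulAux a l b m).2, IsRational p.1 := by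
  induction l generalizing a with
  | nil => exact hm
  | cons q l ih =>
      obtain ⟨E, c⟩ := q
      rintro p hp
      rcases List.mem_cons.mp hp with rfl | hp
      · exact hl (E, c) (by simp)
      · exact ih (fun p hp => hl p (by simp [hp])) p hp

lemma chainL_eq_chain {M : Type*} [Monoid M] (a : M) (l : List (Set M × M)) :
    chainL a l =
      chain l.length (Fin.cases a fun j => (l.get j).2) (fun j => (l.get j).1) := by
  induction l generalizing a with
  | nil => rfl
  | cons p l ih =>
      obtain ⟨E, c⟩ := p
      show ({a} : Set M) * _ * chainL c l = chain (l.length + 1) _ _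
      rw [ih c]
      have ha : (Fin.cases c (fun j => (l.get j).2) : Fin (l.length + 1) → M)
          = fun i => (Fin.cases a (fun j => (((E, c) :: l).get j).2) :
              Fin (l.length + 2) → M) i.succ := by
        funext i
        show _ = (Fin.cases a (fun j => (((E, c) :: l).get j).2) i.succ : M)
        rw [Fin.cases_succ]
        induction i using Fin.cases with
        | zero => simp
        | succ j => simp
      have hE : (fun j : Fin l.length => (l.get j).1)
          = fun i : Fin l.length => (((E, c) :: l).get i.succ).1 := by
        funext i; simp
      rw [ha, hE]
      rfl

lemma biUnion_chainL {M : Type*} [Monoid M] (ls : List (M × List (Set M × M))) :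
    (⋃ p ∈ ls, chainL p.1 p.2) =
      ⋃ i : Fin ls.length, chainL (ls.get i).1 (ls.get i).2 := by
  ext x
  simp only [Set.mem_iUnion]
  constructor
  · rintro ⟨p, hp, hx⟩
    obtain ⟨i, rfl⟩ := List.mem_iff_get.mp hp
    exact ⟨i, hx⟩
  · rintro ⟨i, hx⟩
    exact ⟨_, List.get_mem _ i, hx⟩

theorem good {M : Type*} [Monoid M] (L : Set M) (hL : IsRational L) :
    ∃ ls : List (M × List (Set M × M)),
      (∀ p ∈ ls, ∀ q ∈ p.2, IsRational q.1) ∧ L = ⋃ p ∈ ls, chainL p.1 p.2 := by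
  induction hL with
  | finite s h =>
      refine ⟨h.toFinset.toList.map (fun x => (x, [])), by simp, ?_⟩
      ext x
      simp [chainL]
  | union hs ht ihs iht =>
      obtain ⟨l1, h1, rfl⟩ := ihs
      obtain ⟨l2, h2, rfl⟩ := iht
      refine ⟨l1 ++ l2, ?_, ?_⟩
      · intro p hp
        rcases List.mem_append.mp hp with h | h
        exacts [h1 p h, h2 p h]
      · ext x
        simp only [Set.mem_union, Set.mem_iUnion, List.mem_append]
        aesop
  | mul hs ht ihs iht =>
      obtain ⟨l1, h1, rfl⟩ := ihs
      obtain ⟨l2, h2, rfl⟩ := iht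
      refine ⟨l1.flatMap fun p => l2.map fun q => mulAux p.1 p.2 q.1 q.2, ?_, ?_⟩
      · intro p hp
        simp only [List.mem_flatMap, List.mem_map] at hp
        obtain ⟨r, hr, q, hq, rfl⟩ := hp
        exact mulAux_rat (h1 r hr) (h2 q hq)
      · ext x
        simp only [Set.mem_mul, Set.mem_iUnion, List.mem_flatMap, List.mem_map]
        constructor
        · rintro ⟨y, ⟨p, hp, hy⟩, z, ⟨q, hq, hz⟩, rfl⟩
          refine ⟨_, ⟨p, hp, q, hq, rfl⟩, ?_⟩
          rw [← chainL_mul]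
          exact ⟨y, hy, z, hz, rfl⟩
        · rintro ⟨r, ⟨p, hp, q, hq, rfl⟩, hx⟩
          rw [← chainL_mul] at hx
          obtain ⟨y, hy, z, hz, rfl⟩ := hx
          exact ⟨y, ⟨p, hp, hy⟩, z, ⟨q, hq, hz⟩, rfl⟩
  | star hs ih =>
      refine ⟨[(1, [(_, 1)])], by simpa using hs, ?_⟩
      simp [chainL, Set.singleton_one]

/-- Every rational subset of a monoid is a finite union of sets of the form
`a₁ E₁* a₂ E₂* ⋯ a_t E_t* a_{t+1}` with the `Eᵢ` rational. -/
theorem stmt_4 {M : Type*} [Monoid M] (L : Set M) (hL : IsRational L) :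
    ∃ (k : ℕ) (t : Fin k → ℕ) (a : (i : Fin k) → Fin (t i + 1) → M)
      (E : (i : Fin k) → Fin (t i) → Set M),
      (∀ i j, IsRational (E i j)) ∧ L = ⋃ i : Fin k, chain (t i) (a i) (E i) := by
  obtain ⟨ls, hrat, rfl⟩ := good L hL
  refine ⟨ls.length, fun i => (ls.get i).2.length,
    fun i => Fin.cases (ls.get i).1 (fun j => ((ls.get i).2.get j).2),
    fun i j => ((ls.get i).2.get j).1, ?_, ?_⟩
  · intro i j
    exact hrat _ (List.get_mem _ i) _ (List.get_mem _ j)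
  · rw [biUnion_chainL]
    exact Set.iUnion_congr fun i => chainL_eq_chain _ _
end

section
/- Let F₂ be the free group of rank 2 with basis X₂ = {x₁, x₂}, and let X₂* be the free submonoid of F₂ generated by X₂. If L̄ is a rational subset of F₂, then L̄ ∩ X₂* is a rational subset of the free monoid X₂*. -/
open Pointwise

namespace Benois

abbrev G := FreeGroup (Fin 2)
abbrev Λ := Option (Fin 2 × Bool)

def πl : Λ → G
  | none => 1
  | some l => FreeGroup.mk [l]

def πw (w : List Λ) : G := (w.map πl).prod

@[simp] lemma πw_nil : πw [] = 1 := rfl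
@[simp] lemma πw_cons (a : Λ) (w : List Λ) : πw (a :: w) = πl a * πw w := by
  simp [πw]
@[simp] lemma πw_append (w₁ w₂ : List Λ) : πw (w₁ ++ w₂) = πw w₁ * πw w₂ := by
  simp [πw]

lemma toWord_cons_mul (l : Fin 2 × Bool) (g : G) :
    (FreeGroup.mk [l] * g).toWord =
      if g.toWord.head? = some (l.1, !l.2) then g.toWord.tail else l :: g.toWord := by
  conv_lhs => rw [← FreeGroup.mk_toWord (x := g)]
  rw [FreeGroup.mul_mk, List.singleton_append, FreeGroup.toWord_mk, FreeGroup.reduce.cons,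
    FreeGroup.reduce_toWord]
  rcases hw : g.toWord with _ | ⟨⟨x, b⟩, tl⟩
  · simp
  · simp only [List.head?_cons, Option.some.injEq, List.tail_cons]
    by_cases h : l.1 = x ∧ l.2 = !b
    · rw [if_pos h, if_pos]
      ext <;> simp [← h.1, h.2]
    · rw [if_neg h, if_neg]
      intro hc
      obtain ⟨h1, h2⟩ := Prod.mk.injEq .. ▸ hc
      exact h ⟨h1.symm, by simp [h2]⟩

lemma getLast?_preserved (a : Λ) (h : G) (h1 : h ≠ 1) (h2 : πl a * h ≠ 1) :
    (πl a * h).toWord.getLast? = h.toWord.getLast? := by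
  cases a with
  | none => simp [πl]
  | some l =>
    rcases hw : h.toWord with _ | ⟨hd, tl⟩
    · exact absurd (FreeGroup.toWord_eq_nil_iff.mp hw) h1
    rw [πl, toWord_cons_mul, hw]
    split_ifs with hc
    · rcases tl with _ | ⟨x, tl⟩
      · exfalso
        apply h2
        rw [← FreeGroup.toWord_eq_nil_iff, πl, toWord_cons_mul, hw, if_pos (by exact hc), List.tail_cons]
      · simp [List.getLast?_cons_cons]
    · simp [List.getLast?_cons_cons]

lemma pass (c : Fin 2 × Bool) :
    ∀ (w : List Λ) (k : G), (πw w * k).toWord.getLast? = some c →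
      k.toWord.getLast? ≠ some c → ∃ n, πw (w.drop n) * k = 1 := by
  intro w
  induction w with
  | nil => intro k h1 h2; simp at h1; exact absurd h1 h2
  | cons a w ih =>
    intro k h1 h2
    by_cases hz : πw w * k = 1
    · exact ⟨1, by simpa using hz⟩
    by_cases hc : (πw w * k).toWord.getLast? = some c
    · obtain ⟨n, hn⟩ := ih k hc h2
      exact ⟨n + 1, by simpa using hn⟩
    · exfalso
      rw [πw_cons, mul_assoc] at h1
      have hne : πl a * (πw w * k) ≠ 1 := by
        intro hh
        rw [hh] at h1; simp [FreeGroup.toWord_one] at h1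
      rw [getLast?_preserved a _ hz hne] at h1
      exact hc h1


lemma split_off (i : Fin 2) (g : G) (hg : g.toWord.head? ≠ some (i, false)) (w : List Λ)
    (hw : πw w = FreeGroup.of i * g) :
    ∃ n, πw (w.take n) = FreeGroup.of i ∧ πw (w.drop n) = g := by
  obtain ⟨n, hn⟩ := pass (i, true) w g⁻¹
    (by rw [hw, mul_assoc, mul_inv_cancel, mul_one, FreeGroup.toWord_of]; rfl)
    (by
      rw [FreeGroup.toWord_inv, FreeGroup.invRev]
      rcases hh : g.toWord with _ | ⟨⟨x, b⟩, tl⟩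
      · simp
      · rw [hh] at hg
        simp only [List.map_cons, List.reverse_cons, List.getLast?_concat, ne_eq,
          Option.some.injEq]
        intro hc
        obtain ⟨h1, h2⟩ := Prod.mk.injEq .. ▸ hc
        apply hg
        rw [List.head?_cons, h1, show b = false by simpa using h2])
  have hdrop : πw (w.drop n) = g := by
    have := mul_inv_eq_one.mp hn
    exact this
  refine ⟨n, ?_, hdrop⟩
  have : πw (w.take n) * πw (w.drop n) = πw w := by rw [← πw_append, List.take_append_drop]
  rw [hdrop, hw] at this
  exact mul_right_cancel this

def posProd (is : List (Fin 2)) : G := (is.map FreeGroup.of).prod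

@[simp] lemma posProd_nil : posProd [] = 1 := rfl
@[simp] lemma posProd_cons (i : Fin 2) (is : List (Fin 2)) :
    posProd (i :: is) = FreeGroup.of i * posProd is := by simp [posProd]

lemma toWord_posProd (is : List (Fin 2)) :
    (posProd is).toWord = is.map (fun i => (i, true)) := by
  induction is with
  | nil => simp [FreeGroup.toWord_one]
  | cons i is ih =>
    rw [posProd_cons, FreeGroup.of, toWord_cons_mul, ih]
    rcases is with _ | ⟨j, is⟩
    · simp
    · rw [if_neg (by simp)]
      simp

lemma head?_posProd_ne (i : Fin 2) (is : List (Fin 2)) :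
    (posProd is).toWord.head? ≠ some (i, false) := by
  rw [toWord_posProd]
  rcases is with _ | ⟨j, is⟩ <;> simp


section Automaton

variable {Q : Type} {Q₁ Q₂ : Type}

inductive Path (δ : Q → Λ → Q → Prop) : Q → List Λ → Q → Prop
  | nil (q : Q) : Path δ q [] q
  | cons {q : Q} {a : Λ} {r : Q} {w : List Λ} {q' : Q} :
      δ q a r → Path δ r w q' → Path δ q (a :: w) q'

lemma Path.append {δ : Q → Λ → Q → Prop} {q r q' : Q} {w₁ w₂ : List Λ}
    (h1 : Path δ q w₁ r) (h2 : Path δ r w₂ q') : Path δ q (w₁ ++ w₂) q' := by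
  induction h1 with
  | nil => exact h2
  | cons e _ ih => exact Path.cons e (ih h2)

lemma Path.split {δ : Q → Λ → Q → Prop} {q q' : Q} (w₁ : List Λ) {w₂ : List Λ}
    (h : Path δ q (w₁ ++ w₂) q') : ∃ r, Path δ q w₁ r ∧ Path δ r w₂ q' := by
  induction w₁ generalizing q with
  | nil => exact ⟨q, Path.nil q, h⟩
  | cons a w₁ ih =>
    cases h with
    | cons e hp =>
      obtain ⟨r, hr1, hr2⟩ := ih hp
      exact ⟨r, Path.cons e hr1, hr2⟩

def Lang (δ : Q → Λ → Q → Prop) (start accept : Q → Prop) : Set G :=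
  {g | ∃ w q q', start q ∧ accept q' ∧ Path δ q w q' ∧ πw w = g}

def Recognized (L : Set G) : Prop :=
  ∃ (Q : Type) (_ : Fintype Q) (δ : Q → Λ → Q → Prop) (start accept : Q → Prop),
    L = Lang δ start accept

end Automaton

section Constructions

/-- The empty language is recognized. -/
lemma recognized_empty : Recognized (∅ : Set G) := by
  refine ⟨Unit, inferInstance, fun _ _ _ => False, fun _ => False, fun _ => False, ?_⟩
  ext g
  simp only [Set.mem_empty_iff_false, false_iff, Lang, Set.mem_setOf_eq]
  rintro ⟨w, q, q', hq, -⟩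
  exact hq

/-- The singleton `{1}` is recognized. -/
lemma recognized_one : Recognized ({1} : Set G) := by
  refine ⟨Unit, inferInstance, fun _ _ _ => False, fun _ => True, fun _ => True, ?_⟩
  ext g
  constructor
  · rintro rfl
    exact ⟨[], ⟨⟩, ⟨⟩, trivial, trivial, Path.nil _, rfl⟩
  · rintro ⟨w, q, q', -, -, hp, rfl⟩
    cases hp with
    | nil => rfl
    | cons e _ => exact absurd e (by exact id)

/-- Single letter languages are recognized. -/
lemma recognized_letter (l : Fin 2 × Bool) : Recognized ({FreeGroup.mk [l]} : Set G) := by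
  refine ⟨Bool, inferInstance, fun q a q' => q = false ∧ a = some l ∧ q' = true,
    fun q => q = false, fun q => q = true, ?_⟩
  ext g
  constructor
  · rintro rfl
    exact ⟨[some l], false, true, rfl, rfl, Path.cons ⟨rfl, rfl, rfl⟩ (Path.nil _),
      by simp [πl]⟩
  · rintro ⟨w, q, q', rfl, rfl, hp, rfl⟩
    cases hp with
    | cons e hp' =>
      obtain ⟨-, rfl, rfl⟩ := e
      cases hp' with
      | nil => simp [πl]
      | cons e' _ => exact absurd e'.1 (by simp)

section Union

variable {Q₁ Q₂ : Type} (δ₁ : Q₁ → Λ → Q₁ → Prop) (δ₂ : Q₂ → Λ → Q₂ → Prop)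

/-- Disjoint union transition relation. -/
def sumδ : Q₁ ⊕ Q₂ → Λ → Q₁ ⊕ Q₂ → Prop
  | .inl q, a, .inl q' => δ₁ q a q'
  | .inr q, a, .inr q' => δ₂ q a q'
  | _, _, _ => False

lemma path_sumδ_inl {q : Q₁} {w : List Λ} {p : Q₁ ⊕ Q₂}
    (h : Path (sumδ δ₁ δ₂) (.inl q) w p) : ∃ r, p = .inl r ∧ Path δ₁ q w r := by
  induction w generalizing q with
  | nil => cases h with | nil => exact ⟨q, rfl, Path.nil q⟩
  | cons a w ih =>
    cases h with
    | cons e hp =>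
      rename_i s
      cases s with
      | inl s =>
        obtain ⟨r, rfl, hr⟩ := ih hp
        exact ⟨r, rfl, Path.cons e hr⟩
      | inr s => exact absurd e (by exact id)

lemma path_sumδ_inr {q : Q₂} {w : List Λ} {p : Q₁ ⊕ Q₂}
    (h : Path (sumδ δ₁ δ₂) (.inr q) w p) : ∃ r, p = .inr r ∧ Path δ₂ q w r := by
  induction w generalizing q with
  | nil => cases h with | nil => exact ⟨q, rfl, Path.nil q⟩
  | cons a w ih =>
    cases h with
    | cons e hp =>
      rename_i s
      cases s with
      | inr s =>
        obtain ⟨r, rfl, hr⟩ := ih hp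
        exact ⟨r, rfl, Path.cons e hr⟩
      | inl s => exact absurd e (by exact id)

lemma path_sumδ_of_inl {q r : Q₁} {w : List Λ} (h : Path δ₁ q w r) :
    Path (sumδ δ₁ δ₂) (.inl q) w (.inl r) := by
  induction h with
  | nil => exact Path.nil _
  | cons e _ ih => exact Path.cons (by exact e) ih

lemma path_sumδ_of_inr {q r : Q₂} {w : List Λ} (h : Path δ₂ q w r) :
    Path (sumδ δ₁ δ₂) (.inr q) w (.inr r) := by
  induction h with
  | nil => exact Path.nil _
  | cons e _ ih => exact Path.cons (by exact e) ih

lemma recognized_union {L₁ L₂ : Set G} (h1 : Recognized L₁) (h2 : Recognized L₂) :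
    Recognized (L₁ ∪ L₂) := by
  obtain ⟨Q₁, f1, δ₁, s₁, a₁, rfl⟩ := h1
  obtain ⟨Q₂, f2, δ₂, s₂, a₂, rfl⟩ := h2
  refine ⟨Q₁ ⊕ Q₂, inferInstance, sumδ δ₁ δ₂,
    (fun p => match p with | .inl q => s₁ q | .inr q => s₂ q),
    (fun p => match p with | .inl q => a₁ q | .inr q => a₂ q), ?_⟩
  ext g
  constructor
  · rintro (⟨w, q, q', hs, ha, hp, rfl⟩ | ⟨w, q, q', hs, ha, hp, rfl⟩)
    · exact ⟨w, .inl q, .inl q', hs, ha, path_sumδ_of_inl δ₁ δ₂ hp, rfl⟩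
    · exact ⟨w, .inr q, .inr q', hs, ha, path_sumδ_of_inr δ₁ δ₂ hp, rfl⟩
  · rintro ⟨w, q, q', hs, ha, hp, rfl⟩
    cases q with
    | inl q =>
      obtain ⟨r, rfl, hr⟩ := path_sumδ_inl δ₁ δ₂ hp
      exact Or.inl ⟨w, q, r, hs, ha, hr, rfl⟩
    | inr q =>
      obtain ⟨r, rfl, hr⟩ := path_sumδ_inr δ₁ δ₂ hp
      exact Or.inr ⟨w, q, r, hs, ha, hr, rfl⟩

end Union

end Constructions


section Concat

variable {Q₁ Q₂ : Type} (δ₁ : Q₁ → Λ → Q₁ → Prop) (δ₂ : Q₂ → Λ → Q₂ → Prop)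
  (a₁ : Q₁ → Prop) (s₂ : Q₂ → Prop)

def catδ : Q₁ ⊕ Q₂ → Λ → Q₁ ⊕ Q₂ → Prop
  | .inl q, a, .inl q' => δ₁ q a q'
  | .inr q, a, .inr q' => δ₂ q a q'
  | .inl q, a, .inr q' => a = none ∧ a₁ q ∧ s₂ q'
  | .inr _, _, .inl _ => False

lemma path_catδ_of_inl {q r : Q₁} {w : List Λ} (h : Path δ₁ q w r) :
    Path (catδ δ₁ δ₂ a₁ s₂) (.inl q) w (.inl r) := by
  induction h with
  | nil => exact Path.nil _
  | cons e _ ih => exact Path.cons (by exact e) ih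

lemma path_catδ_of_inr {q r : Q₂} {w : List Λ} (h : Path δ₂ q w r) :
    Path (catδ δ₁ δ₂ a₁ s₂) (.inr q) w (.inr r) := by
  induction h with
  | nil => exact Path.nil _
  | cons e _ ih => exact Path.cons (by exact e) ih

lemma path_catδ_inr {q : Q₂} {w : List Λ} {p : Q₁ ⊕ Q₂}
    (h : Path (catδ δ₁ δ₂ a₁ s₂) (.inr q) w p) : ∃ r, p = .inr r ∧ Path δ₂ q w r := by
  induction w generalizing q with
  | nil => cases h with | nil => exact ⟨q, rfl, Path.nil q⟩
  | cons a w ih =>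
    cases h with
    | cons e hp =>
      rename_i s
      cases s with
      | inr s =>
        obtain ⟨r, rfl, hr⟩ := ih hp
        exact ⟨r, rfl, Path.cons e hr⟩
      | inl s => exact absurd e (by exact id)

lemma path_catδ_cross {q : Q₁} {w : List Λ} {q' : Q₂}
    (h : Path (catδ δ₁ δ₂ a₁ s₂) (.inl q) w (.inr q')) :
    ∃ w₁ w₂ r s, w = w₁ ++ none :: w₂ ∧ Path δ₁ q w₁ r ∧ a₁ r ∧ s₂ s ∧ Path δ₂ s w₂ q' := by
  induction w generalizing q with
  | nil => cases h
  | cons a w ih =>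
    cases h with
    | cons e hp =>
      rename_i m
      cases m with
      | inl m =>
        obtain ⟨w₁, w₂, r, s, rfl, h1, h2, h3, h4⟩ := ih hp
        exact ⟨a :: w₁, w₂, r, s, rfl, Path.cons e h1, h2, h3, h4⟩
      | inr m =>
        obtain ⟨rfl, ha, hs⟩ := e
        obtain ⟨r, heq, hr⟩ := path_catδ_inr δ₁ δ₂ a₁ s₂ hp
        injection heq with heq
        subst heq
        exact ⟨[], w, q, m, rfl, Path.nil q, ha, hs, hr⟩

lemma recognized_mul {L₁ L₂ : Set G} (h1 : Recognized L₁) (h2 : Recognized L₂) :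
    Recognized (L₁ * L₂) := by
  obtain ⟨Q₁, f1, δ₁, s₁, a₁, rfl⟩ := h1
  obtain ⟨Q₂, f2, δ₂, s₂, a₂, rfl⟩ := h2
  refine ⟨Q₁ ⊕ Q₂, inferInstance, catδ δ₁ δ₂ a₁ s₂,
    (fun p => match p with | .inl q => s₁ q | .inr _ => False),
    (fun p => match p with | .inl _ => False | .inr q => a₂ q), ?_⟩
  ext g
  constructor
  · rintro ⟨g₁, ⟨w₁, q, q', hs, ha, hp, rfl⟩, g₂, ⟨w₂, p, p', hs', ha', hp', rfl⟩, rfl⟩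
    refine ⟨w₁ ++ none :: w₂, .inl q, .inr p', hs, ha', ?_, by simp [πl]⟩
    exact (path_catδ_of_inl δ₁ δ₂ a₁ s₂ hp).append
      (Path.cons (by exact ⟨rfl, ha, hs'⟩) (path_catδ_of_inr δ₁ δ₂ a₁ s₂ hp'))
  · rintro ⟨w, q, q', hs, ha, hp, rfl⟩
    cases q with
    | inr q => exact absurd hs (by exact id)
    | inl q =>
      cases q' with
      | inl q' => exact absurd ha (by exact id)
      | inr q' =>
        obtain ⟨w₁, w₂, r, s, rfl, h1, h2, h3, h4⟩ := path_catδ_cross δ₁ δ₂ a₁ s₂ hp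
        exact ⟨πw w₁, ⟨w₁, q, r, hs, h2, h1, rfl⟩, πw w₂, ⟨w₂, s, q', h3, ha, h4, rfl⟩,
          by simp [πl]⟩

end Concat

section Star

variable {Q : Type} (δ : Q → Λ → Q → Prop) (s acc : Q → Prop)

def starδ : Option Q → Λ → Option Q → Prop
  | some q, a, some q' => δ q a q'
  | none, a, some q' => a = none ∧ s q'
  | some q, a, none => a = none ∧ acc q
  | none, _, none => False

lemma path_starδ_of_some {q r : Q} {w : List Λ} (h : Path δ q w r) :
    Path (starδ δ s acc) (some q) w (some r) := by
  induction h with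
  | nil => exact Path.nil _
  | cons e _ ih => exact Path.cons (by exact e) ih

lemma path_starδ_decomp {q : Q} {w : List Λ}
    (h : Path (starδ δ s acc) (some q) w none) :
    ∃ w₁ w₂ r, w = w₁ ++ none :: w₂ ∧ Path δ q w₁ r ∧ acc r ∧
      Path (starδ δ s acc) none w₂ none := by
  induction w generalizing q with
  | nil => cases h
  | cons a w ih =>
    cases h with
    | cons e hp =>
      rename_i m
      cases m with
      | some m =>
        obtain ⟨w₁, w₂, r, rfl, h1, h2, h3⟩ := ih hp
        exact ⟨a :: w₁, w₂, r, rfl, Path.cons e h1, h2, h3⟩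
      | none =>
        obtain ⟨rfl, ha⟩ := e
        exact ⟨[], w, q, rfl, Path.nil q, ha, hp⟩

lemma path_starδ_mem : ∀ (n : ℕ) (w : List Λ), w.length ≤ n →
    Path (starδ δ s acc) none w none → πw w ∈ Submonoid.closure (Lang δ s acc) := by
  intro n
  induction n with
  | zero =>
    intro w hw _
    rw [List.eq_nil_of_length_eq_zero (Nat.le_zero.mp hw)]
    exact one_mem _
  | succ n ih =>
    intro w hw hp
    cases hp with
    | nil => exact one_mem _
    | cons e hp =>
      rename_i a m w
      cases m with
      | none => exact absurd e (by exact id)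
      | some m =>
        obtain ⟨rfl, hm⟩ := e
        obtain ⟨w₁, w₂, r, rfl, h1, h2, h3⟩ := path_starδ_decomp δ s acc hp
        have hlen : w₂.length ≤ n := by
          have := hw
          simp only [List.length_cons, List.length_append] at this
          omega
        have m1 : πw w₁ ∈ Lang δ s acc := ⟨w₁, m, r, hm, h2, h1, rfl⟩
        have m2 := ih w₂ hlen h3
        have : πw (none :: (w₁ ++ none :: w₂)) = πw w₁ * πw w₂ := by simp [πl]
        rw [this]
        exact mul_mem (Submonoid.subset_closure m1) m2

lemma recognized_star {L : Set G} (h : Recognized L) :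
    Recognized (Submonoid.closure L : Set G) := by
  obtain ⟨Q, f, δ, s, acc, rfl⟩ := h
  refine ⟨Option Q, inferInstance, starδ δ s acc, (· = none), (· = none), ?_⟩
  ext g
  constructor
  · intro hg
    induction hg using Submonoid.closure_induction with
    | mem x hx =>
      obtain ⟨w, q, q', hs, ha, hp, rfl⟩ := hx
      refine ⟨none :: (w ++ [none]), none, none, rfl, rfl, ?_, by simp [πl]⟩
      exact Path.cons (by exact ⟨rfl, hs⟩)
        ((path_starδ_of_some δ s acc hp).append
          (Path.cons (by exact ⟨rfl, ha⟩) (Path.nil _)))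
    | one => exact ⟨[], none, none, rfl, rfl, Path.nil _, rfl⟩
    | mul x y _ _ hx hy =>
      obtain ⟨w₁, q, q', hq, hq', hp, rfl⟩ := hx
      obtain ⟨w₂, p, p', hp2, hp2', hpp, rfl⟩ := hy
      subst hq hq' hp2 hp2'
      exact ⟨w₁ ++ w₂, none, none, rfl, rfl, hp.append hpp, by simp⟩
  · rintro ⟨w, q, q', rfl, rfl, hp, rfl⟩
    exact path_starδ_mem δ s acc w.length w le_rfl hp

end Star

lemma recognized_singleton (g : G) : Recognized ({g} : Set G) := by
  have H : ∀ L : List (Fin 2 × Bool), Recognized ({FreeGroup.mk L} : Set G) := by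
    intro L
    induction L with
    | nil => exact recognized_one
    | cons l L ih =>
      have : ({FreeGroup.mk (l :: L)} : Set G) = {FreeGroup.mk [l]} * {FreeGroup.mk L} := by
        rw [Set.singleton_mul_singleton, FreeGroup.mul_mk, List.singleton_append]
      rw [this]
      exact recognized_mul (recognized_letter l) ih
  have := H g.toWord
  rwa [FreeGroup.mk_toWord] at this

lemma recognized_finite {L : Set G} (h : L.Finite) : Recognized L := by
  refine Set.Finite.induction_on (motive := fun s _ => Recognized s) _ h recognized_empty ?_
  intro a t _ _ ih
  rw [Set.insert_eq]
  exact recognized_union (recognized_singleton a) ih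

lemma recognized_of_isRational {L : Set G} (h : IsRational L) : Recognized L := by
  induction h with
  | finite s hs => exact recognized_finite hs
  | union _ _ h1 h2 => exact recognized_union h1 h2
  | mul _ _ h1 h2 => exact recognized_mul h1 h2
  | star _ h => exact recognized_star h


section Core

variable {Q : Type} (δ : Q → Λ → Q → Prop) (accept : Q → Prop)

/-- There is a path from `q` to `q'` whose label multiplies to the single generator `x_i`. -/
def NewT (q : Q) (i : Fin 2) (q' : Q) : Prop := ∃ w, Path δ q w q' ∧ πw w = FreeGroup.of i

/-- From `q` one can reach an accepting state by a path whose label multiplies to `1`. -/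
def EAcc (q : Q) : Prop := ∃ w q', Path δ q w q' ∧ accept q' ∧ πw w = 1

/-- Chains of `NewT`-transitions spelling a positive word. -/
def CT : Q → List (Fin 2) → Q → Prop
  | q, [], q' => q = q'
  | q, i :: is, q' => ∃ r, NewT δ q i r ∧ CT r is q'

lemma chain_complete : ∀ (is : List (Fin 2)) (q q'' : Q) (w : List Λ),
    Path δ q w q'' → accept q'' → πw w = posProd is →
    ∃ q', CT δ q is q' ∧ EAcc δ accept q' := by
  intro is
  induction is with
  | nil =>
    intro q q'' w hp ha hw
    exact ⟨q, rfl, w, q'', hp, ha, by simpa using hw⟩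
  | cons i is ih =>
    intro q q'' w hp ha hw
    obtain ⟨n, hn1, hn2⟩ := split_off i (posProd is) (head?_posProd_ne i is) w
      (by rw [hw, posProd_cons])
    obtain ⟨r, h1, h2⟩ := Path.split (w.take n)
      (show Path δ q (w.take n ++ w.drop n) q'' by rw [List.take_append_drop]; exact hp)
    obtain ⟨q', hc, he⟩ := ih r q'' (w.drop n) h2 ha hn2
    exact ⟨q', ⟨r, ⟨w.take n, h1, hn1⟩, hc⟩, he⟩

lemma chain_sound : ∀ (is : List (Fin 2)) (q q' : Q), CT δ q is q' → EAcc δ accept q' →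
    ∃ w q'', Path δ q w q'' ∧ accept q'' ∧ πw w = posProd is := by
  intro is
  induction is with
  | nil =>
    rintro q q' rfl ⟨w, q'', hp, ha, hw⟩
    exact ⟨w, q'', hp, ha, by simpa using hw⟩
  | cons i is ih =>
    rintro q q' ⟨r, ⟨w₁, hp₁, hw₁⟩, hc⟩ he
    obtain ⟨w₂, q'', hp₂, ha, hw₂⟩ := ih r q' hc he
    exact ⟨w₁ ++ w₂, q'', hp₁.append hp₂, ha, by rw [πw_append, hw₁, hw₂, posProd_cons]⟩

end Core


/-- The free submonoid on the positive generators. -/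
abbrev M : Submonoid G := Submonoid.closure (Set.range (FreeGroup.of : Fin 2 → G))

def a (i : Fin 2) : M := ⟨FreeGroup.of i, Submonoid.subset_closure ⟨i, rfl⟩⟩

lemma posProd_mem (is : List (Fin 2)) : posProd is ∈ M := by
  induction is with
  | nil => exact one_mem _
  | cons i is ih => exact posProd_cons i is ▸ mul_mem (a i).2 ih

def pos (is : List (Fin 2)) : M := ⟨posProd is, posProd_mem is⟩

@[simp] lemma pos_nil : pos [] = 1 := by ext; simp [pos]
@[simp] lemma pos_cons (i : Fin 2) (is : List (Fin 2)) : pos (i :: is) = a i * pos is := by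
  ext; simp [pos, a]

lemma mem_M_iff {m : M} : ∃ is, m = pos is := by
  obtain ⟨x, hx⟩ := m
  refine Submonoid.closure_induction (motive := fun x hx => ∃ is, (⟨x, hx⟩ : M) = pos is) ?_ ?_ ?_ hx
  · rintro x ⟨i, rfl⟩
    exact ⟨[i], by ext; simp [pos]⟩
  · exact ⟨[], by ext; simp [pos]⟩
  · rintro x y hx hy ⟨is, his⟩ ⟨js, hjs⟩
    refine ⟨is ++ js, ?_⟩
    have : (⟨x * y, mul_mem hx hy⟩ : M) = ⟨x, hx⟩ * ⟨y, hy⟩ := rfl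
    rw [this, his, hjs]
    ext
    simp [pos, posProd]

section Elim

variable {Q : Type} (δ : Q → Λ → Q → Prop)

/-- Letter edges of the saturated positive automaton, as subsets of `M`. -/
def edge (q q' : Q) : Set M := {m | ∃ i, NewT δ q i q' ∧ m = a i}

lemma edge_finite (q q' : Q) : (edge δ q q').Finite := by
  apply Set.Finite.subset (Set.finite_range a)
  rintro m ⟨i, -, rfl⟩
  exact ⟨i, rfl⟩

/-- Paths in the letter graph whose intermediate states lie in `X`. -/
inductive PIn (X : Set Q) : Q → M → Q → Prop
  | nil (q : Q) : PIn X q 1 q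
  | single {q : Q} {m : M} {q' : Q} : m ∈ edge δ q q' → PIn X q m q'
  | cons {q : Q} {m : M} {r : Q} {g : M} {q' : Q} :
      m ∈ edge δ q r → r ∈ X → PIn X r g q' → PIn X q (m * g) q'

def PSet (X : Set Q) (q q' : Q) : Set M := {m | PIn δ X q m q'}

lemma PIn.mono {X Y : Set Q} (hXY : X ⊆ Y) {q q' : Q} {m : M} (h : PIn δ X q m q') :
    PIn δ Y q m q' := by
  induction h with
  | nil q => exact PIn.nil q
  | single e => exact PIn.single e
  | cons e hr _ ih => exact PIn.cons e (hXY hr) ih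

lemma PIn.trans {X : Set Q} {q r q' : Q} {g h : M} (h1 : PIn δ X q g r) (hr : r ∈ X)
    (h2 : PIn δ X r h q') : PIn δ X q (g * h) q' := by
  induction h1 with
  | nil q => rwa [one_mul]
  | single e => exact PIn.cons e hr h2
  | cons e hs _ ih => rw [mul_assoc]; exact PIn.cons e hs (ih hr h2)

lemma PSet_empty_finite (q q' : Q) : (PSet δ (∅ : Set Q) q q').Finite := by
  apply Set.Finite.subset ((edge_finite δ q q').insert 1)
  intro m hm
  cases hm with
  | nil => exact Set.mem_insert _ _
  | single e => exact Set.mem_insert_of_mem _ e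
  | cons _ hr _ => exact absurd hr (Set.notMem_empty _)

lemma PSet_insert (X : Set Q) (r q q' : Q) :
    PSet δ (insert r X) q q' =
      PSet δ X q q' ∪
        PSet δ X q r * (Submonoid.closure (PSet δ X r r) : Set M) * PSet δ X r q' := by
  ext m
  constructor
  · intro hm
    induction hm with
    | nil q => exact Or.inl (PIn.nil q)
    | single e => exact Or.inl (PIn.single e)
    | cons e hs hd ih =>
      rename_i q₀ m₀ s g q₁
      rcases hs with rfl | hs
      · rcases ih with hg | ⟨xy, ⟨x, hx, y, hy, rfl⟩, z, hz, rfl⟩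
        · exact Or.inr ⟨m₀ * 1, ⟨m₀, PIn.single e, 1, one_mem _, rfl⟩, g, hg,
            by rw [mul_one]⟩
        · exact Or.inr ⟨m₀ * (x * y), ⟨m₀, PIn.single e, x * y,
            mul_mem (Submonoid.subset_closure hx) hy, rfl⟩, z, hz,
            show m₀ * (x * y) * z = m₀ * (x * y * z) by rw [mul_assoc]⟩
      · rcases ih with hg | ⟨xy, ⟨x, hx, y, hy, rfl⟩, z, hz, rfl⟩
        · exact Or.inl (PIn.cons e hs hg)
        · exact Or.inr ⟨m₀ * x * y, ⟨m₀ * x, PIn.cons e hs hx, y, hy, rfl⟩, z, hz,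
            show m₀ * x * y * z = m₀ * (x * y * z) by rw [mul_assoc m₀, mul_assoc m₀, mul_assoc x]⟩
  · rintro (hm | ⟨xy, ⟨x, hx, y, hy, rfl⟩, z, hz, rfl⟩)
    · exact hm.mono δ (Set.subset_insert r X)
    have key : ∀ y ∈ Submonoid.closure (PSet δ X r r), ∀ z : M,
        PIn δ (insert r X) r z q' → PIn δ (insert r X) r (y * z) q' := by
      intro y hy
      refine Submonoid.closure_induction
        (motive := fun y _ => ∀ z : M, PIn δ (insert r X) r z q' → PIn δ (insert r X) r (y * z) q')
        ?_ ?_ ?_ hy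
      · intro u hu z hz
        exact PIn.trans δ (PIn.mono δ (Set.subset_insert r X) hu) (Set.mem_insert r X) hz
      · intro z hz; rwa [one_mul]
      · intro u v _ _ pu pv z hz
        rw [mul_assoc]
        exact pu _ (pv z hz)
    have hyz : PIn δ (insert r X) r (y * z) q' :=
      key y hy z (PIn.mono δ (Set.subset_insert r X) hz)
    show PIn δ (insert r X) q (x * y * z) q'
    rw [mul_assoc]
    exact PIn.trans δ (PIn.mono δ (Set.subset_insert r X) hx) (Set.mem_insert r X) hyz

end Elim


section Elim2

variable {Q : Type} (δ : Q → Λ → Q → Prop)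

lemma isRational_biUnion {N : Type*} [Monoid N] {ι : Type*} (s : Finset ι) (f : ι → Set N)
    (h : ∀ i ∈ s, IsRational (f i)) : IsRational (⋃ i ∈ s, f i) := by
  classical
  induction s using Finset.induction_on with
  | empty => exact (by simp : (⋃ i ∈ (∅ : Finset ι), f i) = ∅) ▸ IsRational.finite _ Set.finite_empty
  | insert i t hni ih =>
    rw [Finset.set_biUnion_insert]
    exact IsRational.union (h i (Finset.mem_insert_self i t))
      (ih fun j hj => h j (Finset.mem_insert_of_mem hj))

lemma isRational_PSet (X : Finset Q) (q q' : Q) : IsRational (PSet δ (↑X : Set Q) q q') := by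
  classical
  induction X using Finset.induction_on generalizing q q' with
  | empty => exact IsRational.finite _ (by simpa using PSet_empty_finite δ q q')
  | insert r t hni ih =>
    rw [Finset.coe_insert, PSet_insert]
    exact IsRational.union (ih q q')
      (IsRational.mul (IsRational.mul (ih q r) (IsRational.star (ih r r))) (ih r q'))

lemma PIn_toChain {q q' : Q} {m : M} (h : PIn δ Set.univ q m q') :
    ∃ is, m = pos is ∧ CT δ q is q' := by
  induction h with
  | nil q => exact ⟨[], pos_nil.symm, rfl⟩
  | single e =>
    obtain ⟨i, hT, rfl⟩ := e
    exact ⟨[i], by simp, ⟨_, hT, rfl⟩⟩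
  | cons e _ _ ih =>
    obtain ⟨i, hT, rfl⟩ := e
    obtain ⟨is, rfl, hc⟩ := ih
    exact ⟨i :: is, by simp, ⟨_, hT, hc⟩⟩

lemma chain_toPIn : ∀ (is : List (Fin 2)) (q q' : Q), CT δ q is q' →
    PIn δ Set.univ q (pos is) q' := by
  intro is
  induction is with
  | nil => rintro q q' rfl; exact pos_nil ▸ PIn.nil q
  | cons i is ih =>
    rintro q q' ⟨r, hT, hc⟩
    exact pos_cons i is ▸ PIn.cons ⟨i, hT, rfl⟩ (Set.mem_univ r) (ih r q' hc)

theorem main {Q : Type} [Fintype Q] (δ : Q → Λ → Q → Prop) (start accept : Q → Prop) :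
    IsRational (M := M) (Subtype.val ⁻¹' Lang δ start accept) := by
  classical
  have hR : Subtype.val ⁻¹' Lang δ start accept =
      ⋃ q ∈ (Finset.univ : Finset Q), ⋃ q' ∈ (Finset.univ : Finset Q),
        if start q ∧ EAcc δ accept q' then PSet δ Set.univ q q' else ∅ := by
    ext m
    simp only [Set.mem_preimage, Set.mem_iUnion, Finset.mem_univ, exists_prop, true_and]
    constructor
    · rintro ⟨w, q, q'', hs, ha, hp, hπ⟩
      obtain ⟨is, rfl⟩ := mem_M_iff (m := m)
      obtain ⟨q', hc, he⟩ := chain_complete δ accept is q q'' w hp ha hπ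
      exact ⟨q, q', by rw [if_pos ⟨hs, he⟩]; exact chain_toPIn δ is q q' hc⟩
    · rintro ⟨q, q', hm⟩
      split_ifs at hm with hcond
      · obtain ⟨hs, he⟩ := hcond
        obtain ⟨is, rfl, hc⟩ := PIn_toChain δ hm
        obtain ⟨w, q'', hp, ha, hw⟩ := chain_sound δ accept is q q' hc he
        exact ⟨w, q, q'', hs, ha, hp, hw⟩
      · exact absurd hm (Set.notMem_empty _)
  rw [hR]
  refine isRational_biUnion _ _ fun q _ => isRational_biUnion _ _ fun q' _ => ?_
  split_ifs with hcond
  · have := isRational_PSet δ (Finset.univ : Finset Q) q q'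
    rwa [Finset.coe_univ] at this
  · exact IsRational.finite _ Set.finite_empty

end Elim2

end Benois

/-- If `L̄` is rational in the free group `F₂`, then `L̄ ∩ X₂*` is rational in the
free monoid `X₂*` generated by the basis. -/
theorem stmt_10 (L : Set (FreeGroup (Fin 2))) (hL : IsRational L) :
    IsRational
      (M := Submonoid.closure (Set.range (FreeGroup.of : Fin 2 → FreeGroup (Fin 2))))
      (Subtype.val ⁻¹' L) := by
  obtain ⟨Q, fQ, δ, start, accept, rfl⟩ := Benois.recognized_of_isRational hL
  exact Benois.main δ start accept
end
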